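/- For every positive even integer N, the toric code ground state ψ_{C_cut} on the N × N square-lattice torus satisfies Λ_max(ψ_{C_cut})² = 2^{−(N²−1)}; that is, its geometric entanglement of spins is E_G(ψ_{C_cut}) = n_s − 1 = N² − 1, where n_s = N² is the number of stars (vertices). (Theorem 1.) -/

import Mathlib

open scoped BigOperators
open scoped Classical

set_option maxHeartbeats 1000000

noncomputable section

namespace GeomEnt

def qInner {ι : Type} [Fintype ι] (φ ψ : (ι → ZMod 2) → ℂ) : ℂ :=
  ∑ x : ι → ZMod 2, (starRingEnd ℂ) (φ x) * ψ x

def IsProductState {ι : Type} [Fintype ι] (Φ : (ι → ZMod 2) → ℂ) : Prop :=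
  ∃ φ : ι → ZMod 2 → ℂ,
    (∀ i, ‖φ i 0‖ ^ 2 + ‖φ i 1‖ ^ 2 = 1) ∧
    ∀ x, Φ x = ∏ i, φ i (x i)

def LambdaMax {ι : Type} [Fintype ι] (ψ : (ι → ZMod 2) → ℂ) : ℝ :=
  sSup { r : ℝ | ∃ Φ, IsProductState Φ ∧ r = ‖qInner Φ ψ‖ }

def EG {ι : Type} [Fintype ι] (ψ : (ι → ZMod 2) → ℂ) : ℝ :=
  - Real.logb 2 (LambdaMax ψ ^ 2)

/-- The code state of a linear code `C`: the uniform superposition over the codewords. -/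
def codeState {ι : Type} [Fintype ι] (C : Set (ι → ZMod 2)) : (ι → ZMod 2) → ℂ :=
  fun x => if x ∈ C then (((Real.sqrt (Nat.card C))⁻¹ : ℝ) : ℂ) else 0

/-- Cut space of the N × N square-lattice torus: qubits on edges `(v, d)`,
edge `(v,0)` joining `v` and `v+(1,0)`, edge `(v,1)` joining `v` and `v+(0,1)`. -/
def Ccut (N : ℕ) : Set ((ZMod N × ZMod N) × Fin 2 → ZMod 2) :=
  { x | ∃ T : ZMod N × ZMod N → ZMod 2,
      ∀ v : ZMod N × ZMod N,
        x (v, 0) = T v + T (v + (1, 0)) ∧ x (v, 1) = T v + T (v + (0, 1)) }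

/-! ### Auxiliary material -/

abbrev VV (N : ℕ) := ZMod N × ZMod N
abbrev EE (N : ℕ) := VV N × Fin 2

/-- The boundary (coboundary) map: `bd T` is the cut determined by the vertex set `T`. -/
def bd {N : ℕ} (T : VV N → ZMod 2) : EE N → ZMod 2 :=
  fun e => if e.2 = 0 then T e.1 + T (e.1 + (1, 0)) else T e.1 + T (e.1 + (0, 1))

lemma z2 : ∀ a b : ZMod 2, a + b = 0 ↔ a = b := by decide

lemma z2self : ∀ a : ZMod 2, a + a = 0 := by decide

lemma bd_add {N : ℕ} (T T' : VV N → ZMod 2) : bd (T + T') = bd T + bd T' := by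
  funext e
  simp only [bd, Pi.add_apply]
  split <;> ring

lemma mem_Ccut {N : ℕ} {x : EE N → ZMod 2} : x ∈ Ccut N ↔ ∃ T, x = bd T := by
  constructor
  · rintro ⟨T, hT⟩
    refine ⟨T, funext fun e => ?_⟩
    rcases e with ⟨v, d⟩
    fin_cases d
    · simpa [bd] using (hT v).1
    · simpa [bd] using (hT v).2
  · rintro ⟨T, rfl⟩
    exact ⟨T, fun v => ⟨by simp [bd], by simp [bd]⟩⟩

lemma zero_mem_Ccut {N : ℕ} : (0 : EE N → ZMod 2) ∈ Ccut N :=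
  ⟨0, fun v => by simp⟩

lemma Ccut_add {N : ℕ} {x y : EE N → ZMod 2} (hx : x ∈ Ccut N) (hy : y ∈ Ccut N) :
    x + y ∈ Ccut N := by
  rw [mem_Ccut] at hx hy ⊢
  obtain ⟨T, rfl⟩ := hx
  obtain ⟨S, rfl⟩ := hy
  exact ⟨T + S, (bd_add T S).symm⟩

section Connectivity

variable {N : ℕ} [NeZero N]

lemma rowA (T : VV N → ZMod 2)
    (h0 : ∀ v : VV N, v.1 ≠ v.2 → T v = T (v + (1, 0))) (y : ZMod N) :
    ∀ k : ℕ, T (y - k, y) = T (y, y) := by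
  intro k
  induction k with
  | zero => simp
  | succ k ih =>
    by_cases h : (y - ((k+1 : ℕ) : ZMod N)) = y
    · rw [h]
    · have h2 := h0 (y - ((k+1 : ℕ) : ZMod N), y) h
      have h3 : (y - ((k+1 : ℕ) : ZMod N), y) + ((1 : ZMod N), (0 : ZMod N))
          = (y - (k : ℕ), y) := by
        rw [Prod.mk_add_mk, Prod.mk.injEq]
        refine ⟨by push_cast; ring, by ring⟩
      rw [h2, h3, ih]

lemma rowA' (T : VV N → ZMod 2)
    (h0 : ∀ v : VV N, v.1 ≠ v.2 → T v = T (v + (1, 0))) (v : VV N) :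
    T v = T (v.2, v.2) := by
  have := rowA T h0 v.2 (v.2 - v.1).val
  rwa [ZMod.natCast_rightInverse _, sub_sub_cancel] at this

lemma diagA (T : VV N → ZMod 2)
    (h0 : ∀ v : VV N, v.1 ≠ v.2 → T v = T (v + (1, 0)))
    (h1 : ∀ v : VV N, v.1 = v.2 → T v = T (v + (0, 1))) :
    ∀ k : ℕ, T ((k : ZMod N), (k : ZMod N)) = T (0, 0) := by
  intro k
  induction k with
  | zero => norm_num
  | succ k ih =>
    have h2 := h1 ((k : ZMod N), (k : ZMod N)) rfl
    have h3 := rowA' T h0 ((k : ZMod N), (k : ZMod N) + 1)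
    push_cast
    rw [← ih, h2]
    rw [Prod.mk_add_mk, add_zero] at h2 ⊢
    rw [h3]

lemma constA (T : VV N → ZMod 2)
    (h0 : ∀ v : VV N, v.1 ≠ v.2 → T v = T (v + (1, 0)))
    (h1 : ∀ v : VV N, v.1 = v.2 → T v = T (v + (0, 1))) (v : VV N) :
    T v = T 0 := by
  rw [rowA' T h0 v]
  have := diagA T h0 h1 (v.2.val)
  rw [ZMod.natCast_rightInverse _] at this
  rw [this]
  rfl

lemma colB (T : VV N → ZMod 2)
    (h1 : ∀ v : VV N, v.1 ≠ v.2 → T v = T (v + (0, 1))) (x : ZMod N) :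
    ∀ k : ℕ, T (x, x - k) = T (x, x) := by
  intro k
  induction k with
  | zero => simp
  | succ k ih =>
    by_cases h : (x - ((k+1 : ℕ) : ZMod N)) = x
    · rw [h]
    · have h2 := h1 (x, x - ((k+1 : ℕ) : ZMod N)) (fun hc => h hc.symm)
      have h3 : (x, x - ((k+1 : ℕ) : ZMod N)) + ((0 : ZMod N), (1 : ZMod N))
          = (x, x - (k : ℕ)) := by
        rw [Prod.mk_add_mk, Prod.mk.injEq]
        refine ⟨by ring, by push_cast; ring⟩
      rw [h2, h3, ih]

lemma colB' (T : VV N → ZMod 2)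
    (h1 : ∀ v : VV N, v.1 ≠ v.2 → T v = T (v + (0, 1))) (v : VV N) :
    T v = T (v.1, v.1) := by
  have := colB T h1 v.1 (v.1 - v.2).val
  rwa [ZMod.natCast_rightInverse _, sub_sub_cancel] at this

lemma diagB (T : VV N → ZMod 2)
    (h0 : ∀ v : VV N, v.1 = v.2 → T v = T (v + (1, 0)))
    (h1 : ∀ v : VV N, v.1 ≠ v.2 → T v = T (v + (0, 1))) :
    ∀ k : ℕ, T ((k : ZMod N), (k : ZMod N)) = T (0, 0) := by
  intro k
  induction k with
  | zero => norm_num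
  | succ k ih =>
    have h2 := h0 ((k : ZMod N), (k : ZMod N)) rfl
    have h3 := colB' T h1 ((k : ZMod N) + 1, (k : ZMod N))
    push_cast
    rw [← ih, h2]
    rw [Prod.mk_add_mk, add_zero] at h2 ⊢
    rw [h3]

lemma constB (T : VV N → ZMod 2)
    (h0 : ∀ v : VV N, v.1 = v.2 → T v = T (v + (1, 0)))
    (h1 : ∀ v : VV N, v.1 ≠ v.2 → T v = T (v + (0, 1))) (v : VV N) :
    T v = T 0 := by
  rw [colB' T h1 v]
  have := diagB T h0 h1 (v.1.val)
  rw [ZMod.natCast_rightInverse _] at this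
  rw [this]
  rfl

end Connectivity

/-- The set of edges of the first spanning connected subgraph. -/
def PA {N : ℕ} (e : EE N) : Prop := if e.2 = 0 then e.1.1 ≠ e.1.2 else e.1.1 = e.1.2

lemma vanishA {N : ℕ} [NeZero N] {x : EE N → ZMod 2} (hx : x ∈ Ccut N)
    (h : ∀ e : EE N, PA e → x e = 0) : x = 0 := by
  obtain ⟨T, rfl⟩ := mem_Ccut.mp hx
  have h0 : ∀ v : VV N, v.1 ≠ v.2 → T v = T (v + (1, 0)) := by
    intro v hv
    have := h (v, 0) (by simpa [PA] using hv)
    simp only [bd, if_pos rfl] at this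
    exact (z2 _ _).mp this
  have h1 : ∀ v : VV N, v.1 = v.2 → T v = T (v + (0, 1)) := by
    intro v hv
    have := h (v, 1) (by simpa [PA] using hv)
    simp only [bd] at this
    rw [if_neg (by decide : ¬ ((1 : Fin 2) = 0))] at this
    exact (z2 _ _).mp this
  have hc := constA T h0 h1
  funext e
  simp only [bd, Pi.zero_apply]
  split <;> rw [hc e.1, hc (e.1 + _)] <;> exact z2self _

lemma vanishB {N : ℕ} [NeZero N] {x : EE N → ZMod 2} (hx : x ∈ Ccut N)
    (h : ∀ e : EE N, ¬ PA e → x e = 0) : x = 0 := by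
  obtain ⟨T, rfl⟩ := mem_Ccut.mp hx
  have h0 : ∀ v : VV N, v.1 = v.2 → T v = T (v + (1, 0)) := by
    intro v hv
    have := h (v, 0) (by simpa [PA] using hv)
    simp only [bd, if_pos rfl] at this
    exact (z2 _ _).mp this
  have h1 : ∀ v : VV N, v.1 ≠ v.2 → T v = T (v + (0, 1)) := by
    intro v hv
    have := h (v, 1) (by simpa [PA] using hv)
    simp only [bd] at this
    rw [if_neg (by decide : ¬ ((1 : Fin 2) = 0))] at this
    exact (z2 _ _).mp this
  have hc := constB T h0 h1
  funext e
  simp only [bd, Pi.zero_apply]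
  split <;> rw [hc e.1, hc (e.1 + _)] <;> exact z2self _

lemma Ccut_eq_on {N : ℕ} [NeZero N] (P : EE N → Prop)
    (hvan : ∀ x ∈ Ccut N, (∀ e, P e → x e = 0) → x = 0)
    {x y : EE N → ZMod 2} (hx : x ∈ Ccut N) (hy : y ∈ Ccut N)
    (hxy : ∀ e, P e → x e = y e) : x = y := by
  have hz : x + y = 0 := hvan _ (Ccut_add hx hy) (fun e he => by
    rw [Pi.add_apply, hxy e he]; exact z2self _)
  funext e
  have h := congrFun hz e
  rw [Pi.add_apply] at h
  exact (z2 _ _).mp (by simpa using h)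

/-! ### Generic code-state lemmas (proved for an abstract index type so that all
typeclass instances are the classical ones, matching those in `qInner`). -/

section Generic

variable {ι : Type} [Fintype ι]

lemma code_eq_on (C : Set (ι → ZMod 2))
    (hclosed : ∀ x ∈ C, ∀ y ∈ C, x + y ∈ C) (A : Finset ι)
    (hvan : ∀ x ∈ C, (∀ e ∈ A, x e = 0) → x = 0)
    {x y : ι → ZMod 2} (hx : x ∈ C) (hy : y ∈ C)
    (hxy : ∀ e ∈ A, x e = y e) : x = y := by
  have hz : x + y = 0 := hvan _ (hclosed x hx y hy) (fun e he => by
    rw [Pi.add_apply, hxy e he]; exact z2self _)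
  funext e
  have h := congrFun hz e
  rw [Pi.add_apply] at h
  exact (z2 _ _).mp (by simpa using h)

/-- The key counting estimate: if only the zero codeword vanishes on `A`, then the
sum over the code of the squared weights restricted to `A` is at most `1`. -/
lemma sum_sq_le_one (C : Set (ι → ZMod 2))
    (hclosed : ∀ x ∈ C, ∀ y ∈ C, x + y ∈ C) (A : Finset ι)
    (hvan : ∀ x ∈ C, (∀ e ∈ A, x e = 0) → x = 0)
    (w : ι → ZMod 2 → ℝ) (hw1 : ∀ e, w e 0 ^ 2 + w e 1 ^ 2 = 1) :
    ∑ x ∈ C.toFinset, ∏ e ∈ A, (w e (x e)) ^ 2 ≤ 1 := by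
  set g : ι → ZMod 2 → ℝ := fun e s => if e ∈ A then w e s ^ 2 else (if s = 0 then 1 else 0)
    with hg
  set m : (ι → ZMod 2) → (ι → ZMod 2) := fun x e => if e ∈ A then x e else 0 with hm
  clear_value g m
  have hgnn : ∀ e s, 0 ≤ g e s := by
    intro e s
    simp only [hg]
    split
    · positivity
    · split <;> norm_num
  have hterm : ∀ x : ι → ZMod 2,
      ∏ e ∈ A, (w e (x e)) ^ 2 = ∏ e, g e (m x e) := by
    intro x
    rw [← Finset.prod_mul_prod_compl A (fun e => g e (m x e))]
    have h2 : ∏ e ∈ Aᶜ, g e (m x e) = 1 := by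
      apply Finset.prod_eq_one
      intro e he
      rw [Finset.mem_compl] at he
      simp only [hg, hm, if_neg he]
      norm_num
    have h3 : ∏ e ∈ A, g e (m x e) = ∏ e ∈ A, (w e (x e)) ^ 2 := by
      apply Finset.prod_congr rfl
      intro e he
      simp only [hg, hm, if_pos he]
    rw [h2, h3, mul_one]
  have hinj : ∀ x ∈ C.toFinset, ∀ y ∈ C.toFinset, m x = m y → x = y := by
    intro x hx y hy hxy
    rw [Set.mem_toFinset] at hx hy
    refine code_eq_on C hclosed A hvan hx hy (fun e he => ?_)
    have := congrFun hxy e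
    simpa [hm, if_pos he] using this
  have himg : ∑ x ∈ C.toFinset, ∏ e, g e (m x e)
      = ∑ z ∈ C.toFinset.image m, ∏ e, g e (z e) :=
    (Finset.sum_image (f := fun z => ∏ e, g e (z e)) hinj).symm
  have hfull : ∑ z ∈ C.toFinset.image m, (∏ e, g e (z e))
      ≤ ∑ z : ι → ZMod 2, ∏ e, g e (z e) :=
    Finset.sum_le_sum_of_subset_of_nonneg (Finset.subset_univ _)
      (fun z _ _ => Finset.prod_nonneg fun e _ => hgnn e _)
  have hprod : ∑ z : ι → ZMod 2, (∏ e, g e (z e)) = ∏ e, ∑ s, g e s :=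
    (Fintype.prod_sum g).symm
  have hone : ∏ e : ι, (∑ s, g e s) = 1 := by
    apply Finset.prod_eq_one
    intro e _
    rw [show (Finset.univ : Finset (ZMod 2)) = {0, 1} from by decide,
      Finset.sum_insert (by decide), Finset.sum_singleton]
    by_cases hP : e ∈ A
    · simp only [hg, if_pos hP]
      exact hw1 e
    · simp only [hg, if_neg hP]
      norm_num
  calc ∑ x ∈ C.toFinset, ∏ e ∈ A, (w e (x e)) ^ 2
      = ∑ x ∈ C.toFinset, ∏ e, g e (m x e) :=
        Finset.sum_congr rfl fun x _ => hterm x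
    _ = ∑ z ∈ C.toFinset.image m, ∏ e, g e (z e) := himg
    _ ≤ ∑ z : ι → ZMod 2, ∏ e, g e (z e) := hfull
    _ = ∏ e, ∑ s, g e s := hprod
    _ = 1 := hone

/-- Upper bound: the overlap of any product state with a code state is at most
`|C|^{-1/2}`, provided only the zero codeword is supported inside `A`, and only
the zero codeword is supported inside `Aᶜ`. -/
lemma overlap_le (C : Set (ι → ZMod 2))
    (hclosed : ∀ x ∈ C, ∀ y ∈ C, x + y ∈ C) (A : Finset ι)
    (hvanA : ∀ x ∈ C, (∀ e ∈ A, x e = 0) → x = 0)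
    (hvanB : ∀ x ∈ C, (∀ e, e ∉ A → x e = 0) → x = 0)
    (Φ : (ι → ZMod 2) → ℂ) (hΦ : IsProductState Φ) :
    ‖qInner Φ (codeState C)‖ ≤ (Real.sqrt (Nat.card C))⁻¹ := by
  obtain ⟨φ, hnorm, hprod⟩ := hΦ
  set c : ℝ := (Real.sqrt (Nat.card C))⁻¹ with hc
  have hc0 : 0 ≤ c := inv_nonneg.mpr (Real.sqrt_nonneg _)
  set w : ι → ZMod 2 → ℝ := fun e s => ‖φ e s‖ with hwdef
  have hw1 : ∀ e : ι, w e 0 ^ 2 + w e 1 ^ 2 = 1 := hnorm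
  have h1 : qInner Φ (codeState C)
      = ∑ x ∈ C.toFinset, (starRingEnd ℂ) (Φ x) * (c : ℂ) := by
    have hsub : ∑ x ∈ C.toFinset, ((starRingEnd ℂ) (Φ x) * codeState C x)
        = ∑ x : ι → ZMod 2, (starRingEnd ℂ) (Φ x) * codeState C x := by
      apply Finset.sum_subset (Finset.subset_univ _)
      intro x _ hx
      rw [Set.mem_toFinset] at hx
      simp only [codeState, if_neg hx, mul_zero]
    rw [qInner, ← hsub]
    apply Finset.sum_congr rfl
    intro x hx
    rw [Set.mem_toFinset] at hx
    simp only [codeState, if_pos hx, hc]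
  set f : (ι → ZMod 2) → ℝ := fun x => ∏ e ∈ A, w e (x e) with hf
  set k : (ι → ZMod 2) → ℝ := fun x => ∏ e ∈ Aᶜ, w e (x e) with hk
  have hS1 : ∑ x ∈ C.toFinset, ∏ e, w e (x e)
      = ∑ x ∈ C.toFinset, f x * k x :=
    Finset.sum_congr rfl fun x _ => (Finset.prod_mul_prod_compl A _).symm
  have hCS := Finset.sum_mul_sq_le_sq_mul_sq C.toFinset f k
  have e1 : ∑ x ∈ C.toFinset, f x ^ 2
      = ∑ x ∈ C.toFinset, ∏ e ∈ A, (w e (x e)) ^ 2 :=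
    Finset.sum_congr rfl fun x _ => (Finset.prod_pow _ _ _).symm
  have e2 : ∑ x ∈ C.toFinset, k x ^ 2
      = ∑ x ∈ C.toFinset, ∏ e ∈ Aᶜ, (w e (x e)) ^ 2 :=
    Finset.sum_congr rfl fun x _ => (Finset.prod_pow _ _ _).symm
  have hAle : ∑ x ∈ C.toFinset, f x ^ 2 ≤ 1 := by
    rw [e1]; exact sum_sq_le_one C hclosed A hvanA w hw1
  have hvanB' : ∀ x ∈ C, (∀ e ∈ Aᶜ, x e = 0) → x = 0 := by
    intro x hx hh
    exact hvanB x hx (fun e he => hh e (Finset.mem_compl.mpr he))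
  have hBle : ∑ x ∈ C.toFinset, k x ^ 2 ≤ 1 := by
    rw [e2]; exact sum_sq_le_one C hclosed Aᶜ hvanB' w hw1
  have hS2 : (∑ x ∈ C.toFinset, f x * k x) ^ 2 ≤ 1 := by
    calc (∑ x ∈ C.toFinset, f x * k x) ^ 2
        ≤ (∑ x ∈ C.toFinset, f x ^ 2) * ∑ x ∈ C.toFinset, k x ^ 2 := hCS
      _ ≤ 1 * 1 := mul_le_mul hAle hBle (Finset.sum_nonneg fun x _ => sq_nonneg _)
          (by norm_num)
      _ = 1 := one_mul 1
  have hSnn : 0 ≤ ∑ x ∈ C.toFinset, f x * k x := by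
    apply Finset.sum_nonneg
    intro x _
    exact mul_nonneg (Finset.prod_nonneg fun e _ => norm_nonneg _)
      (Finset.prod_nonneg fun e _ => norm_nonneg _)
  have hS3 : ∑ x ∈ C.toFinset, f x * k x ≤ 1 := by nlinarith
  rw [h1]
  calc ‖∑ x ∈ C.toFinset, (starRingEnd ℂ) (Φ x) * (c : ℂ)‖
      ≤ ∑ x ∈ C.toFinset, ‖(starRingEnd ℂ) (Φ x) * (c : ℂ)‖ :=
        norm_sum_le _ _
    _ = ∑ x ∈ C.toFinset, (∏ e, w e (x e)) * c := by
        apply Finset.sum_congr rfl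
        intro x _
        rw [norm_mul, Complex.norm_conj, Complex.norm_real, Real.norm_eq_abs, abs_of_nonneg hc0, hprod x,
          norm_prod]
    _ = (∑ x ∈ C.toFinset, ∏ e, w e (x e)) * c := by rw [Finset.sum_mul]
    _ ≤ 1 * c := by
        apply mul_le_mul_of_nonneg_right ?_ hc0
        rw [hS1]
        exact hS3
    _ = c := one_mul c

/-- Lower bound: the all-zeros computational basis state achieves overlap `|C|^{-1/2}`. -/
lemma delta_overlap (C : Set (ι → ZMod 2)) (h0 : (0 : ι → ZMod 2) ∈ C) :
    ∃ Φ, IsProductState Φ ∧ ((Real.sqrt (Nat.card C))⁻¹ : ℝ)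
      = ‖qInner Φ (codeState C)‖ := by
  refine ⟨fun x => if x = 0 then 1 else 0,
    ⟨fun e s => if s = 0 then 1 else 0, ?_, ?_⟩, ?_⟩
  · intro i
    show ‖(if (0 : ZMod 2) = 0 then (1 : ℂ) else 0)‖ ^ 2
      + ‖(if (1 : ZMod 2) = 0 then (1 : ℂ) else 0)‖ ^ 2 = 1
    rw [if_pos rfl, if_neg (by decide : ¬ ((1 : ZMod 2) = 0))]
    simp
  · intro x
    show (if x = 0 then (1 : ℂ) else 0) = ∏ i, (if x i = 0 then (1 : ℂ) else 0)
    by_cases hx : x = 0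
    · subst hx
      simp
    · rw [if_neg hx, eq_comm]
      obtain ⟨e, he⟩ := Function.ne_iff.mp hx
      apply Finset.prod_eq_zero (Finset.mem_univ e)
      rw [if_neg (by simpa using he)]
  · have hsum : qInner (fun x : ι → ZMod 2 => if x = 0 then (1 : ℂ) else 0)
        (codeState C) = codeState C 0 := by
      rw [qInner]
      rw [Fintype.sum_eq_single (0 : ι → ZMod 2)]
      · simp
      · intro b hb
        simp [hb]
    rw [hsum]
    simp only [codeState, if_pos h0]
    rw [Complex.norm_real, Real.norm_eq_abs, abs_of_nonneg (inv_nonneg.mpr (Real.sqrt_nonneg _))]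

lemma lambdaMax_code (C : Set (ι → ZMod 2)) (h0 : (0 : ι → ZMod 2) ∈ C)
    (hclosed : ∀ x ∈ C, ∀ y ∈ C, x + y ∈ C) (A : Finset ι)
    (hvanA : ∀ x ∈ C, (∀ e ∈ A, x e = 0) → x = 0)
    (hvanB : ∀ x ∈ C, (∀ e, e ∉ A → x e = 0) → x = 0) :
    LambdaMax (codeState C) = (Real.sqrt (Nat.card C))⁻¹ := by
  have hub : ∀ r ∈ { r : ℝ | ∃ Φ, IsProductState Φ ∧
      r = ‖qInner Φ (codeState C)‖ },
      r ≤ (Real.sqrt (Nat.card C))⁻¹ := by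
    rintro r ⟨Φ, hΦ, rfl⟩
    exact overlap_le C hclosed A hvanA hvanB Φ hΦ
  have hmem := delta_overlap C h0
  apply le_antisymm
  · exact csSup_le ⟨_, hmem⟩ hub
  · exact le_csSup ⟨_, hub⟩ hmem

end Generic

/-- The `Λ_max` of the toric code ground state. -/
lemma lambdaMax_eq {N : ℕ} [NeZero N] :
    LambdaMax (codeState (Ccut N)) = (Real.sqrt (Nat.card (Ccut N)))⁻¹ := by
  refine lambdaMax_code (Ccut N) zero_mem_Ccut
    (fun x hx y hy => Ccut_add hx hy) (Finset.univ.filter PA) ?_ ?_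
  · intro x hx hh
    refine vanishA hx (fun e he => hh e ?_)
    rw [Finset.mem_filter]
    exact ⟨Finset.mem_univ e, he⟩
  · intro x hx hh
    refine vanishB hx (fun e he => hh e ?_)
    rw [Finset.mem_filter]
    intro hcon
    exact he hcon.2

/-- The boundary map as an additive group homomorphism. -/
def bdHom (N : ℕ) : (VV N → ZMod 2) →+ (EE N → ZMod 2) :=
  AddMonoidHom.mk' bd bd_add

lemma card_Ccut {N : ℕ} [NeZero N] : Nat.card (Ccut N) = 2 ^ (N ^ 2 - 1) := by
  have hrange : Ccut N = (AddMonoidHom.range (bdHom N) : Set (EE N → ZMod 2)) := by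
    ext x
    rw [mem_Ccut]
    constructor
    · rintro ⟨T, rfl⟩
      exact ⟨T, rfl⟩
    · rintro ⟨T, rfl⟩
      exact ⟨T, rfl⟩
  have hker : Nat.card (AddMonoidHom.ker (bdHom N)) = 2 := by
    have heq : (AddMonoidHom.ker (bdHom N)) ≃ ZMod 2 :=
      { toFun := fun kk => kk.1 0
        invFun := fun a => ⟨fun _ => a, by
          rw [AddMonoidHom.mem_ker]
          funext e
          show bd (fun _ => a) e = 0
          simp only [bd]
          split <;> exact z2self a⟩
        left_inv := fun kk => by
          obtain ⟨T, hT⟩ := kk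
          apply Subtype.ext
          funext v
          rw [AddMonoidHom.mem_ker] at hT
          have hT' : ∀ e : EE N, bd T e = 0 := fun e => congrFun hT e
          have h0 : ∀ v : VV N, T v = T (v + (1, 0)) := fun v =>
            (z2 _ _).mp (by simpa [bd] using hT' (v, 0))
          have h1 : ∀ v : VV N, T v = T (v + (0, 1)) := fun v => by
            have := hT' (v, 1)
            simp only [bd] at this
            rw [if_neg (by decide : ¬ ((1 : Fin 2) = 0))] at this
            exact (z2 _ _).mp this
          exact (constA T (fun v _ => h0 v) (fun v _ => h1 v) v).symm
        right_inv := fun a => rfl }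
    rw [Nat.card_congr heq, Nat.card_eq_fintype_card, ZMod.card]
  have hdom : Nat.card (VV N → ZMod 2) = 2 ^ (N ^ 2) := by
    rw [Nat.card_eq_fintype_card, Fintype.card_fun, ZMod.card, Fintype.card_prod,
      ZMod.card]
    rw [sq]
  have h5 : Nat.card (VV N → ZMod 2) =
      Nat.card ((VV N → ZMod 2) ⧸ AddMonoidHom.ker (bdHom N))
        * Nat.card (AddMonoidHom.ker (bdHom N)) :=
    AddSubgroup.card_eq_card_quotient_mul_card_addSubgroup _
  have h6 : Nat.card ((VV N → ZMod 2) ⧸ AddMonoidHom.ker (bdHom N))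
      = Nat.card (AddMonoidHom.range (bdHom N)) :=
    Nat.card_congr (QuotientAddGroup.quotientKerEquivRange (bdHom N)).toEquiv
  have h7 : Nat.card (Ccut N) = Nat.card (AddMonoidHom.range (bdHom N)) := by
    rw [hrange]
    rfl
  have hN1 : 1 ≤ N ^ 2 := Nat.one_le_pow _ _ (Nat.pos_of_ne_zero (NeZero.ne N))
  have hpow : 2 ^ (N ^ 2 - 1) * 2 = 2 ^ (N ^ 2) := by
    rw [← pow_succ]
    congr 1
    omega
  rw [h7]
  rw [hdom, h6, hker] at h5
  omega

/-- Theorem 1: the toric code ground state on the N × N torus (N positive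
and even) has squared maximal overlap `2^{-(N²-1)}`, i.e. geometric entanglement of
spins `n_s - 1 = N² - 1`. -/
theorem toric_code_geometric_entanglement_of_spins
    (N : ℕ) [NeZero N] (hpos : 0 < N) (heven : Even N) :
    LambdaMax (codeState (Ccut N)) ^ 2 = ((2 : ℝ) ^ (N ^ 2 - 1))⁻¹ ∧
    EG (codeState (Ccut N)) = (N : ℝ) ^ 2 - 1 := by
  have hN1 : 1 ≤ N ^ 2 := Nat.one_le_pow _ _ hpos
  have hfirst : LambdaMax (codeState (Ccut N)) ^ 2 = ((2 : ℝ) ^ (N ^ 2 - 1))⁻¹ := by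
    rw [lambdaMax_eq, card_Ccut, inv_pow, Real.sq_sqrt (by positivity)]
    norm_cast
  refine ⟨hfirst, ?_⟩
  rw [EG, hfirst, Real.logb_inv, neg_neg, Real.logb_pow,
    Real.logb_self_eq_one (by norm_num : (1 : ℝ) < 2)]
  rw [mul_one, Nat.cast_sub hN1]
  push_cast
  ring

end GeomEnt
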